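/- Let T ∈ B(X) with 0 ∈ ρ_e^r(T), and suppose there exists a generalized inverse S₀ ∈ B(X) of T whose spectrum satisfies σ(S₀) ⊆ {0} (i.e. S₀ is quasinilpotent). Then ρ_e^r(T) = ℂ, that is, for every λ ∈ ℂ the operator T − λI is Fredholm and λ ∈ reg(T). -/

import Mathlib

variable {X : Type*} [NormedAddCommGroup X] [NormedSpace ℂ X] [CompleteSpace X]

/-- `T` is a Fredholm operator: its kernel is finite dimensional and its range is closed with
finite codimension. -/
def IsFredholmOp (T : X →L[ℂ] X) : Prop :=
  FiniteDimensional ℂ (LinearMap.ker (T : X →ₗ[ℂ] X)) ∧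
  IsClosed (LinearMap.range (T : X →ₗ[ℂ] X) : Set X) ∧
  FiniteDimensional ℂ (X ⧸ LinearMap.range (T : X →ₗ[ℂ] X))

/-- `reg T` is the set of `λ ∈ ℂ` possessing an open neighbourhood `V` on which there is an
analytic function `R : V → B(X)` such that `R μ` is a generalized inverse of `T - μI` for
every `μ ∈ V`. -/
def regSet (T : X →L[ℂ] X) : Set ℂ :=
  {l : ℂ | ∃ V : Set ℂ, IsOpen V ∧ l ∈ V ∧
    ∃ R : ℂ → X →L[ℂ] X, AnalyticOnNhd ℂ R V ∧
      ∀ μ ∈ V, (T - μ • 1) * R μ * (T - μ • 1) = T - μ • 1 ∧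
               R μ * (T - μ • 1) * R μ = R μ}

/-- If `r * t * r = r`, then `r * t` is idempotent. -/
lemma stmt14_aux_idem {A : Type*} [Ring A] {t r : A} (h : r * t * r = r) :
    (1 - r * t) * (1 - r * t) = 1 - r * t := by
  have h2 : (r * t) * (r * t) = r * t := by
    rw [← mul_assoc, h]
  calc (1 - r * t) * (1 - r * t) = 1 - r * t - r * t + (r * t) * (r * t) := by noncomm_ring
  _ = 1 - r * t := by rw [h2]; noncomm_ring

/-- Conjugation identity for nearby idempotents. -/
lemma stmt14_aux_conj {A : Type*} [Ring A] {p p' : A} (hp : p * p = p) :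
    (1 + (p' - p) * (p + p - 1)) * p = p' * p := by
  have h1 : (p + p - 1) * p = p := by
    rw [sub_mul, add_mul, hp, one_mul]; abel
  calc (1 + (p' - p) * (p + p - 1)) * p = p + (p' - p) * ((p + p - 1) * p) := by noncomm_ring
  _ = p + (p' - p) * p := by rw [h1]
  _ = p + (p' * p - p * p) := by rw [sub_mul]
  _ = p' * p := by rw [hp]; abel

set_option maxHeartbeats 1000000 in
/-- Let `T ∈ B(X)` with `0 ∈ ρₑʳ(T)` (`T` is Fredholm and `0 ∈ reg T`), and
suppose there exists a generalized inverse `S₀ ∈ B(X)` of `T` with `σ(S₀) ⊆ {0}` (`S₀` is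
quasinilpotent).  Then `ρₑʳ(T) = ℂ`: for every `λ ∈ ℂ` the operator `T - λI` is Fredholm and
`λ ∈ reg T`. -/
theorem stmt14 (T : X →L[ℂ] X)
    (hFred : IsFredholmOp T) (hreg : (0 : ℂ) ∈ regSet T)
    (S₀ : X →L[ℂ] X) (hTST : T * S₀ * T = T) (hSTS : S₀ * T * S₀ = S₀)
    (hq : spectrum ℂ S₀ ⊆ {0}) :
    ∀ l : ℂ, IsFredholmOp (T - l • 1) ∧ l ∈ regSet T := by
  classical
  -- notation
  set F : X →L[ℂ] X := 1 - S₀ * T with hFdef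
  set G : X →L[ℂ] X := 1 - T * S₀ with hGdef
  -- `S₀` is quasinilpotent, hence `1 - z • S₀` is invertible for every `z`.
  have hsr : spectralRadius ℂ S₀ = 0 := by
    refine le_antisymm ?_ zero_le
    refine iSup₂_le fun k hk => ?_
    have hk0 : k = 0 := hq hk
    simp [hk0]
  have hu : ∀ z : ℂ, IsUnit ((1 : X →L[ℂ] X) - z • S₀) := fun z =>
    spectrum.isUnit_one_sub_smul_of_lt_inv_radius
      (by rw [hsr, ENNReal.inv_zero]; exact ENNReal.coe_lt_top)
  set U : ℂ → X →L[ℂ] X := fun z => Ring.inverse (1 - z • S₀) with hUdef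
  have hUl : ∀ z, U z * (1 - z • S₀) = 1 := fun z => Ring.inverse_mul_cancel _ (hu z)
  have hUr : ∀ z, (1 - z • S₀) * U z = 1 := fun z => Ring.mul_inverse_cancel _ (hu z)
  -- commutation of `U z` with `S₀`
  have hcomm : ∀ z, S₀ * U z = U z * S₀ := by
    intro z
    have hswap : (1 - z • S₀) * S₀ = S₀ * (1 - z • S₀) := by
      rw [sub_mul, mul_sub, one_mul, mul_one, smul_mul_assoc, mul_smul_comm]
    calc S₀ * U z = 1 * (S₀ * U z) := (one_mul _).symm
    _ = U z * (1 - z • S₀) * (S₀ * U z) := by rw [hUl z]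
    _ = U z * ((1 - z • S₀) * (S₀ * U z)) := by rw [mul_assoc]
    _ = U z * (((1 - z • S₀) * S₀) * U z) := by rw [mul_assoc]
    _ = U z * ((S₀ * (1 - z • S₀)) * U z) := by rw [hswap]
    _ = U z * (S₀ * ((1 - z • S₀) * U z)) := by rw [mul_assoc]
    _ = U z * (S₀ * 1) := by rw [hUr z]
    _ = U z * S₀ := by rw [mul_one]
  -- `U z = 1 + z • (U z * S₀) = 1 + z • (S₀ * U z)`
  have hUe : ∀ z, U z = 1 + z • (U z * S₀) := by
    intro z
    have h := hUl z
    rw [mul_sub, mul_one, mul_smul_comm] at h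
    rw [← h]; abel
  have hUe' : ∀ z, U z = 1 + z • (S₀ * U z) := by
    intro z
    have h := hUr z
    rw [sub_mul, one_mul, smul_mul_assoc] at h
    rw [← h]; abel
  -- basic algebraic identities
  have hTF : T * F = 0 := by
    rw [hFdef, mul_sub, mul_one, ← mul_assoc, hTST, sub_self]
  have hGT : G * T = 0 := by
    rw [hGdef, sub_mul, one_mul, mul_assoc, ← mul_assoc, hTST, sub_self]
  have hFS : F * S₀ = 0 := by
    rw [hFdef, sub_mul, one_mul, mul_assoc, ← mul_assoc, hSTS, sub_self]
  have hSG : S₀ * G = 0 := by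
    rw [hGdef, mul_sub, mul_one, ← mul_assoc, hSTS, sub_self]
  have hFU : ∀ z, F * U z = F := by
    intro z
    have h1 : F * (1 - z • S₀) = F := by
      rw [mul_sub, mul_one, mul_smul_comm, hFS, smul_zero, sub_zero]
    conv_rhs => rw [← mul_one F, ← hUr z, ← mul_assoc, h1]
  have hUG : ∀ z, U z * G = G := by
    intro z
    have h1 : (1 - z • S₀) * G = G := by
      rw [sub_mul, one_mul, smul_mul_assoc, hSG, smul_zero, sub_zero]
    conv_rhs => rw [← one_mul G, ← hUl z, mul_assoc, h1]
  -- key identities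
  have hkey1 : ∀ z, (T - z • 1) * (U z * S₀) = 1 - G * U z := by
    intro z
    have hc : T * (U z * S₀) = T * S₀ * U z := by
      rw [← hcomm z, ← mul_assoc]
    calc (T - z • 1) * (U z * S₀)
        = T * (U z * S₀) - z • (U z * S₀) := by
          rw [sub_mul, smul_mul_assoc, one_mul]
    _ = T * S₀ * U z - z • (U z * S₀) := by rw [hc]
    _ = T * S₀ * U z - (U z - 1) := by
          have h2 : z • (U z * S₀) = U z - 1 := by
            conv_rhs => rw [hUe z]
            abel
          rw [h2]
    _ = 1 - (1 - T * S₀) * U z := by rw [sub_mul, one_mul]; abel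
    _ = 1 - G * U z := by rw [hGdef]
  have hkey2 : ∀ z, (U z * S₀) * (T - z • 1) = 1 - U z * F := by
    intro z
    calc (U z * S₀) * (T - z • 1)
        = U z * (S₀ * T) - z • (U z * S₀) := by
          rw [mul_sub, mul_smul_comm, mul_one, mul_assoc]
    _ = U z * (S₀ * T) - (U z - 1) := by
          have h2 : z • (U z * S₀) = U z - 1 := by
            conv_rhs => rw [hUe z]
            abel
          rw [h2]
    _ = 1 - U z * (1 - S₀ * T) := by rw [mul_sub, mul_one]; abel
    _ = 1 - U z * F := by rw [hFdef]
  have hTU : ∀ z, (T - z • 1) * U z = T - z • (G * U z) := by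
    intro z
    have h1 : T * U z = T + z • (T * S₀ * U z) := by
      conv_lhs => rw [hUe' z]
      rw [mul_add, mul_one, mul_smul_comm, ← mul_assoc]
    calc (T - z • 1) * U z = T * U z - z • U z := by
          rw [sub_mul, smul_mul_assoc, one_mul]
    _ = T + z • (T * S₀ * U z) - z • U z := by rw [h1]
    _ = T - z • ((1 - T * S₀) * U z) := by
          rw [sub_mul, one_mul, smul_sub]; abel
    _ = T - z • (G * U z) := by rw [hGdef]
  have hUT : ∀ z, U z * (T - z • 1) = T - z • (U z * F) := by
    intro z
    have h1 : U z * T = T + z • (U z * (S₀ * T)) := by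
      conv_lhs => rw [hUe z]
      rw [add_mul, one_mul, smul_mul_assoc, mul_assoc]
    calc U z * (T - z • 1) = U z * T - z • U z := by
          rw [mul_sub, mul_smul_comm, mul_one]
    _ = T + z • (U z * (S₀ * T)) - z • U z := by rw [h1]
    _ = T - z • (U z * (1 - S₀ * T)) := by
          rw [mul_sub, mul_one, smul_sub]; abel
    _ = T - z • (U z * F) := by rw [hFdef]
  -- if `(T - z•1) x = 0` then `x = U z (F x)`
  have hrep : ∀ (z : ℂ) (x : X), (T - z • 1) x = 0 → x = (U z) (F x) := by
    intro z x hx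
    have h2 := congrArg (fun g : X →L[ℂ] X => g x) (hkey2 z)
    simp only [ContinuousLinearMap.mul_apply] at h2
    rw [hx, map_zero, map_zero] at h2
    have h3 : (0 : X) = x - (U z) (F x) := by
      simpa only [ContinuousLinearMap.sub_apply, ContinuousLinearMap.one_apply,
        ContinuousLinearMap.mul_apply] using h2
    exact sub_eq_zero.mp h3.symm
  have hFker : ∀ x : X, T (F x) = 0 := by
    intro x
    have := congrArg (fun g : X →L[ℂ] X => g x) hTF
    simpa [ContinuousLinearMap.mul_apply] using this
  -- `U` is entire
  have hUdiff : Differentiable ℂ U := by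
    intro z
    exact DifferentiableAt.comp z (differentiableAt_inverse (𝕜 := ℂ) (hu z))
      (((differentiable_id.smul_const S₀).const_sub 1) z)
  have hUanOn : AnalyticOnNhd ℂ U Set.univ := fun z _ => hUdiff.analyticAt z
  have hUinj : ∀ z, Function.Injective (U z) := by
    intro z x y hxy
    have h1 : ((1 - z • S₀) * U z) x = ((1 - z • S₀) * U z) y := by
      simp only [ContinuousLinearMap.mul_apply, hxy]
    rwa [hUr z, ContinuousLinearMap.one_apply, ContinuousLinearMap.one_apply] at h1
  -- THE KEY STEP : `G * U z * F = 0` for all `z`.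
  have hNzero : ∀ z : ℂ, G * U z * F = 0 := by
    obtain ⟨V, hVo, hV0, R, hRan, hRgi⟩ := hreg
    set P : ℂ → X →L[ℂ] X := fun ν => 1 - R ν * (T - ν • 1) with hPdef
    set D : X →L[ℂ] X := P 0 + P 0 - 1 with hDdef
    -- core computation at a fixed small `μ ≠ 0`
    have hcore : ∀ μ : ℂ, μ ≠ 0 → μ ∈ V → ‖P μ - P 0‖ * ‖D‖ < 1 → G * U μ * F = 0 := by
      intro μ hμ0 hμV hsm
      haveI hkerT_fd : FiniteDimensional ℂ (LinearMap.ker ((T : X →L[ℂ] X) : X →ₗ[ℂ] X)) := hFred.1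
      -- the projection `P 0` fixes `ker T`
      have hP0fix : ∀ x : X, T x = 0 → (P 0) x = x := by
        intro x hx
        have hx' : (T - (0 : ℂ) • 1) x = 0 := by
          simp [ContinuousLinearMap.sub_apply, hx]
        show (1 - R 0 * (T - (0 : ℂ) • 1)) x = x
        rw [ContinuousLinearMap.sub_apply, ContinuousLinearMap.one_apply,
          ContinuousLinearMap.mul_apply, hx', map_zero, sub_zero]
      have hP0idem : P 0 * P 0 = P 0 := by
        simpa [hPdef] using stmt14_aux_idem (hRgi 0 hV0).2
      -- the invertible comparison operator
      set Aop : X →L[ℂ] X := 1 + (P μ - P 0) * D with hAdef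
      have hAunit : IsUnit Aop := by
        have hn : ‖(P μ - P 0) * D‖ < 1 := lt_of_le_of_lt (norm_mul_le _ _) hsm
        have h1 : IsUnit ((1 : X →L[ℂ] X) - -((P μ - P 0) * D)) :=
          (Units.oneSub (-((P μ - P 0) * D)) (by rwa [norm_neg])).isUnit
        rwa [sub_neg_eq_add] at h1
      have hAinj : Function.Injective Aop := by
        obtain ⟨u, hu'⟩ := hAunit
        intro x y hxy
        have h1 : ((u⁻¹ : (X →L[ℂ] X)ˣ) * Aop) x = ((u⁻¹ : (X →L[ℂ] X)ˣ) * Aop) y := by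
          simp only [ContinuousLinearMap.mul_apply, hxy]
        rwa [← hu', Units.inv_mul, ContinuousLinearMap.one_apply,
          ContinuousLinearMap.one_apply] at h1
      -- `(T - μ•1) * P μ = 0`
      have hTPμ : (T - μ • 1) * P μ = 0 := by
        rw [hPdef]
        simp only
        rw [mul_sub, mul_one, ← mul_assoc, (hRgi μ hμV).1, sub_self]
      -- `Aop` maps `ker T` into `ker (T - μ•1)`
      have hAP : Aop * P 0 = P μ * P 0 := stmt14_aux_conj hP0idem
      have hmaple : Submodule.map (Aop : X →ₗ[ℂ] X) (LinearMap.ker ((T : X →L[ℂ] X) : X →ₗ[ℂ] X))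
          ≤ LinearMap.ker ((T - μ • 1 : X →L[ℂ] X) : X →ₗ[ℂ] X) := by
        rintro _ ⟨x, hx, rfl⟩
        have hx' : T x = 0 := hx
        have h1 : Aop x = (P μ) ((P 0) x) := by
          have := congrArg (fun g : X →L[ℂ] X => g x) hAP
          simp only [ContinuousLinearMap.mul_apply] at this
          rw [hP0fix x hx'] at this
          simpa [hP0fix x hx'] using this
        have h2 : (T - μ • 1) (Aop x) = 0 := by
          rw [h1, hP0fix x hx']
          have := congrArg (fun g : X →L[ℂ] X => g x) hTPμ
          simpa [ContinuousLinearMap.mul_apply] using this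
        exact h2
      -- the comparison submodule
      set Ksub : Submodule ℂ X := LinearMap.ker ((T : X →L[ℂ] X) : X →ₗ[ℂ] X) ⊓ LinearMap.ker ((G * U μ : X →L[ℂ] X) : X →ₗ[ℂ] X) with hKdef
      haveI hK_fd : FiniteDimensional ℂ Ksub :=
        Submodule.finiteDimensional_of_le inf_le_left
      -- `ker (T - μ•1) ⊆ U μ (Ksub)`
      have hkerle : LinearMap.ker ((T - μ • 1 : X →L[ℂ] X) : X →ₗ[ℂ] X)
          ≤ Submodule.map ((U μ : X →ₗ[ℂ] X)) Ksub := by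
        intro x hx
        have hx' : (T - μ • 1) x = 0 := hx
        have hxr := hrep μ x hx'
        have hmem1 : T (F x) = 0 := hFker x
        have hmem2 : (G * U μ) (F x) = 0 := by
          have h1 := congrArg (fun g : X →L[ℂ] X => g (F x)) (hTU μ)
          simp only [ContinuousLinearMap.mul_apply] at h1
          rw [← hxr, hx'] at h1
          rw [ContinuousLinearMap.sub_apply, ContinuousLinearMap.smul_apply, hmem1,
            zero_sub] at h1
          have h2 : μ • ((G * U μ) (F x)) = 0 := by
            have h3 := congrArg Neg.neg h1
            simpa only [neg_zero, neg_neg, ContinuousLinearMap.mul_apply] using h3.symm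
          rcases smul_eq_zero.mp h2 with h | h
          · exact absurd h hμ0
          · exact h
        exact ⟨F x, ⟨hmem1, hmem2⟩, hxr.symm⟩
      haveI hkerμ_fd : FiniteDimensional ℂ (LinearMap.ker ((T - μ • 1 : X →L[ℂ] X) : X →ₗ[ℂ] X)) :=
        Submodule.finiteDimensional_of_le hkerle
      -- rank comparison
      have hr1 : Module.finrank ℂ (LinearMap.ker ((T - μ • 1 : X →L[ℂ] X) : X →ₗ[ℂ] X)) ≤ Module.finrank ℂ Ksub := by
        calc Module.finrank ℂ (LinearMap.ker ((T - μ • 1 : X →L[ℂ] X) : X →ₗ[ℂ] X))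
            ≤ Module.finrank ℂ (Submodule.map ((U μ : X →ₗ[ℂ] X)) Ksub) :=
              Submodule.finrank_mono hkerle
        _ = Module.finrank ℂ Ksub :=
              (LinearEquiv.finrank_eq
                (Submodule.equivMapOfInjective ((U μ : X →ₗ[ℂ] X)) (hUinj μ) Ksub)).symm
      have hr2 : Module.finrank ℂ (LinearMap.ker ((T : X →L[ℂ] X) : X →ₗ[ℂ] X))
          ≤ Module.finrank ℂ (LinearMap.ker ((T - μ • 1 : X →L[ℂ] X) : X →ₗ[ℂ] X)) := by
        calc Module.finrank ℂ (LinearMap.ker ((T : X →L[ℂ] X) : X →ₗ[ℂ] X))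
            = Module.finrank ℂ (Submodule.map (Aop : X →ₗ[ℂ] X) (LinearMap.ker ((T : X →L[ℂ] X) : X →ₗ[ℂ] X))) :=
              LinearEquiv.finrank_eq
                (Submodule.equivMapOfInjective ((Aop : X →ₗ[ℂ] X)) hAinj _)
        _ ≤ Module.finrank ℂ (LinearMap.ker ((T - μ • 1 : X →L[ℂ] X) : X →ₗ[ℂ] X)) :=
              Submodule.finrank_mono hmaple
      have hKeq : Ksub = LinearMap.ker ((T : X →L[ℂ] X) : X →ₗ[ℂ] X) :=
        Submodule.eq_of_le_of_finrank_le inf_le_left (le_trans hr2 hr1)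
      -- conclude
      ext x
      have hmem : F x ∈ Ksub := by
        rw [hKeq]
        exact hFker x
      have : (G * U μ) (F x) = 0 := hmem.2
      simpa [ContinuousLinearMap.mul_apply] using this
    -- continuity gives the smallness condition near `0`
    have hRc : ContinuousAt R 0 := (hRan 0 hV0).continuousAt
    have hTc : Continuous fun ν : ℂ => T - ν • (1 : X →L[ℂ] X) :=
      continuous_const.sub (continuous_id.smul continuous_const)
    have hPc : ContinuousAt P 0 := by
      exact continuousAt_const.sub (hRc.mul hTc.continuousAt)
    have hnt : Filter.Tendsto (fun ν => ‖P ν - P 0‖ * ‖D‖) (nhds 0)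
        (nhds (‖P 0 - P 0‖ * ‖D‖)) :=
      ((hPc.sub continuousAt_const).norm.mul continuousAt_const)
    have h01 : ‖P 0 - P 0‖ * ‖D‖ < 1 := by simp
    have hev1 : ∀ᶠ μ in nhds (0 : ℂ), ‖P μ - P 0‖ * ‖D‖ < 1 :=
      Filter.Tendsto.eventually_lt_const h01 hnt
    have hevV : ∀ᶠ μ in nhds (0 : ℂ), μ ∈ V := hVo.eventually_mem hV0
    obtain ⟨r, hr0, hball⟩ := Metric.eventually_nhds_iff_ball.mp (hev1.and hevV)
    -- pick a nonzero point in the ball and apply the identity theorem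
    set z₀ : ℂ := ((r / 2 : ℝ) : ℂ) with hz₀def
    have hz₀ball : z₀ ∈ Metric.ball (0 : ℂ) r := by
      rw [Metric.mem_ball, dist_zero_right]
      simp only [hz₀def, Complex.norm_real]
      rw [Real.norm_eq_abs, abs_of_pos (half_pos hr0)]
      exact half_lt_self hr0
    have hz₀ne : z₀ ≠ 0 := by
      simp only [hz₀def]
      exact_mod_cast Complex.ofReal_ne_zero.mpr (ne_of_gt (half_pos hr0))
    have hopen : IsOpen (Metric.ball (0 : ℂ) r \ {0}) :=
      Metric.isOpen_ball.sdiff isClosed_singleton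
    have hNan : AnalyticOnNhd ℂ (fun z => G * U z * F) Set.univ :=
      (analyticOnNhd_const.mul hUanOn).mul analyticOnNhd_const
    have hEq : (fun z => G * U z * F) =ᶠ[nhds z₀] 0 := by
      refine Filter.eventuallyEq_of_mem (hopen.mem_nhds ⟨hz₀ball, hz₀ne⟩) ?_
      intro μ hμ
      have h1 := hball μ hμ.1
      exact hcore μ (by simpa using hμ.2) h1.2 h1.1
    have := hNan.eqOn_zero_of_preconnected_of_eventuallyEq_zero
      isPreconnected_univ (Set.mem_univ z₀) hEq
    exact fun z => this (Set.mem_univ z)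
  -- global generalized inverse identities
  have hgi1 : ∀ z, (T - z • 1) * (U z * S₀) * (T - z • 1) = T - z • 1 := by
    intro z
    calc (T - z • 1) * (U z * S₀) * (T - z • 1)
        = (1 - G * U z) * (T - z • 1) := by rw [hkey1 z]
    _ = (T - z • 1) - G * (U z * (T - z • 1)) := by
          rw [sub_mul, one_mul, mul_assoc]
    _ = (T - z • 1) - G * (T - z • (U z * F)) := by rw [hUT z]
    _ = (T - z • 1) - (G * T - z • (G * (U z * F))) := by
          rw [mul_sub, mul_smul_comm]
    _ = T - z • 1 := by
          rw [hGT, ← mul_assoc, hNzero z, smul_zero, sub_zero, sub_zero]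
  have hgi2 : ∀ z, (U z * S₀) * (T - z • 1) * (U z * S₀) = U z * S₀ := by
    intro z
    calc (U z * S₀) * (T - z • 1) * (U z * S₀)
        = (1 - U z * F) * (U z * S₀) := by rw [hkey2 z]
    _ = U z * S₀ - U z * (F * (U z * S₀)) := by
          rw [sub_mul, one_mul, mul_assoc]
    _ = U z * S₀ := by
          rw [← mul_assoc F (U z) S₀, hFU z, hFS, mul_zero, sub_zero]
  -- the main conclusion
  intro l
  constructor
  · -- Fredholm
    refine ⟨?_, ?_, ?_⟩
    · -- finite-dimensional kernel
      haveI hkerT_fd : FiniteDimensional ℂ (LinearMap.ker ((T : X →L[ℂ] X) : X →ₗ[ℂ] X)) := hFred.1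
      have hle : LinearMap.ker ((T - l • 1 : X →L[ℂ] X) : X →ₗ[ℂ] X)
          ≤ Submodule.map ((U l : X →ₗ[ℂ] X)) (LinearMap.ker ((T : X →L[ℂ] X) : X →ₗ[ℂ] X)) := by
        intro x hx
        exact ⟨F x, hFker x, (hrep l x hx).symm⟩
      exact Submodule.finiteDimensional_of_le hle
    · -- closed range
      have hrangeEq : LinearMap.range ((T - l • 1 : X →L[ℂ] X) : X →ₗ[ℂ] X) = LinearMap.ker ((G * U l : X →L[ℂ] X) : X →ₗ[ℂ] X) := by
        apply le_antisymm
        · rintro _ ⟨x, rfl⟩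
          have hcomp : (G * U l) * (T - l • 1) = 0 := by
            calc (G * U l) * (T - l • 1) = G * (U l * (T - l • 1)) := by rw [mul_assoc]
            _ = G * (T - l • (U l * F)) := by rw [hUT l]
            _ = G * T - l • (G * (U l * F)) := by rw [mul_sub, mul_smul_comm]
            _ = 0 := by rw [hGT, ← mul_assoc, hNzero l, smul_zero, sub_zero]
          have := congrArg (fun g : X →L[ℂ] X => g x) hcomp
          simpa [ContinuousLinearMap.mul_apply] using this
        · intro z hz
          refine ⟨(U l * S₀) z, ?_⟩
          have h1 := congrArg (fun g : X →L[ℂ] X => g z) (hkey1 l)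
          simp only [ContinuousLinearMap.mul_apply, ContinuousLinearMap.sub_apply,
            ContinuousLinearMap.one_apply] at h1
          have hz' : (G * U l) z = 0 := hz
          simp only [ContinuousLinearMap.mul_apply] at hz'
          rw [hz', sub_zero] at h1
          simpa [ContinuousLinearMap.mul_apply] using h1
      rw [hrangeEq]
      exact ContinuousLinearMap.isClosed_ker _
    · -- finite-dimensional cokernel
      have hrangeEq : LinearMap.range ((T - l • 1 : X →L[ℂ] X) : X →ₗ[ℂ] X) = LinearMap.ker ((G * U l : X →L[ℂ] X) : X →ₗ[ℂ] X) := by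
        apply le_antisymm
        · rintro _ ⟨x, rfl⟩
          have hcomp : (G * U l) * (T - l • 1) = 0 := by
            calc (G * U l) * (T - l • 1) = G * (U l * (T - l • 1)) := by rw [mul_assoc]
            _ = G * (T - l • (U l * F)) := by rw [hUT l]
            _ = G * T - l • (G * (U l * F)) := by rw [mul_sub, mul_smul_comm]
            _ = 0 := by rw [hGT, ← mul_assoc, hNzero l, smul_zero, sub_zero]
          have := congrArg (fun g : X →L[ℂ] X => g x) hcomp
          simpa [ContinuousLinearMap.mul_apply] using this
        · intro z hz
          refine ⟨(U l * S₀) z, ?_⟩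
          have h1 := congrArg (fun g : X →L[ℂ] X => g z) (hkey1 l)
          simp only [ContinuousLinearMap.mul_apply, ContinuousLinearMap.sub_apply,
            ContinuousLinearMap.one_apply] at h1
          have hz' : (G * U l) z = 0 := hz
          simp only [ContinuousLinearMap.mul_apply] at hz'
          rw [hz', sub_zero] at h1
          simpa [ContinuousLinearMap.mul_apply] using h1
      rw [hrangeEq]
      -- `X ⧸ ker (G * U l)` is finite dimensional since `range G` is
      haveI hcoker_fd : FiniteDimensional ℂ (X ⧸ LinearMap.range ((T : X →L[ℂ] X) : X →ₗ[ℂ] X)) := hFred.2.2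
      have hle2 : LinearMap.range ((T : X →L[ℂ] X) : X →ₗ[ℂ] X) ≤ LinearMap.ker ((G : X →ₗ[ℂ] X)) := by
        rintro _ ⟨x, rfl⟩
        have := congrArg (fun g : X →L[ℂ] X => g x) hGT
        simpa [ContinuousLinearMap.mul_apply] using this
      set gbar : (X ⧸ LinearMap.range ((T : X →L[ℂ] X) : X →ₗ[ℂ] X)) →ₗ[ℂ] X :=
        Submodule.liftQ (LinearMap.range ((T : X →L[ℂ] X) : X →ₗ[ℂ] X)) ((G : X →ₗ[ℂ] X)) hle2 with hgbar
      have hrgG : LinearMap.range ((G : X →ₗ[ℂ] X)) = LinearMap.range gbar := by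
        conv_lhs => rw [← Submodule.liftQ_mkQ (LinearMap.range ((T : X →L[ℂ] X) : X →ₗ[ℂ] X)) ((G : X →ₗ[ℂ] X)) hle2]
        exact LinearMap.range_comp_of_range_eq_top _ (Submodule.range_mkQ _)
      haveI hGrange_fd : FiniteDimensional ℂ (LinearMap.range ((G : X →ₗ[ℂ] X))) := by
        rw [hrgG]
        infer_instance
      set g : X →ₗ[ℂ] X := ((G * U l : X →L[ℂ] X) : X →ₗ[ℂ] X) with hgdef
      have hgle : LinearMap.range g ≤ LinearMap.range ((G : X →ₗ[ℂ] X)) := by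
        rintro _ ⟨x, rfl⟩
        exact ⟨(U l) x, by simp [hgdef, ContinuousLinearMap.mul_apply]⟩
      haveI hrg_fd : FiniteDimensional ℂ (LinearMap.range g) :=
        Submodule.finiteDimensional_of_le hgle
      have hkerEq : LinearMap.ker ((G * U l : X →L[ℂ] X) : X →ₗ[ℂ] X) = LinearMap.ker g := rfl
      rw [hkerEq]
      exact (g.quotKerEquivRange).symm.finiteDimensional
  · -- regular point
    refine ⟨Set.univ, isOpen_univ, Set.mem_univ l, fun z => U z * S₀, ?_, ?_⟩
    · exact hUanOn.mul analyticOnNhd_const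
    · intro μ _
      exact ⟨hgi1 μ, hgi2 μ⟩
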